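/- Let D be an m×m matrix over Z/2Z, V invertible upper triangular with R = D·V reduced. If column j of R is zero, then column j of V (viewed as a vector in (Z/2Z)^m) lies in the kernel of D, and the set of columns V[j] over all j with R[j] = 0 forms a basis of ker(D). -/

import Mathlib

open Matrix

/-- `i` is the pivot of column `j` of `M`. -/
def IsPivot {m : ℕ} (M : Matrix (Fin m) (Fin m) (ZMod 2)) (i j : Fin m) : Prop :=
  M i j ≠ 0 ∧ ∀ i' : Fin m, i < i' → M i' j = 0

/-- `M` is reduced: all nonzero columns have pairwise distinct pivots. -/
def Reduced {m : ℕ} (M : Matrix (Fin m) (Fin m) (ZMod 2)) : Prop :=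
  ∀ i j j' : Fin m, IsPivot M i j → IsPivot M i j' → j = j'

/-- Every nonzero column has a pivot. -/
lemma exists_pivot {m : ℕ} (M : Matrix (Fin m) (Fin m) (ZMod 2)) (j : Fin m)
    (h : Mᵀ j ≠ 0) : ∃ i, IsPivot M i j := by
  classical
  have hne : (Finset.univ.filter fun i => M i j ≠ 0).Nonempty := by
    by_contra hc
    apply h
    funext i
    simp only [Finset.not_nonempty_iff_eq_empty, Finset.filter_eq_empty_iff] at hc
    simpa using hc (Finset.mem_univ i)
  refine ⟨(Finset.univ.filter fun i => M i j ≠ 0).max' hne, ?_, ?_⟩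
  · have := Finset.max'_mem _ hne
    simpa using this
  · intro i' hi'
    by_contra hne'
    have : i' ≤ (Finset.univ.filter fun i => M i j ≠ 0).max' hne :=
      Finset.le_max' _ _ (by simpa using hne')
    exact absurd hi' (not_lt.mpr this)

/-- The nonzero columns of a reduced matrix are linearly independent. -/
lemma reduced_linearIndependent {m : ℕ} (M : Matrix (Fin m) (Fin m) (ZMod 2))
    (hred : Reduced M) :
    LinearIndependent (ZMod 2) (fun j : {j : Fin m // Mᵀ j ≠ 0} => Mᵀ j.1) := by
  classical
  rw [Fintype.linearIndependent_iff]
  intro g hg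
  by_contra hc
  push_neg at hc
  -- pivot row of each nonzero column
  choose p hp using fun j : {j : Fin m // Mᵀ j ≠ 0} => exists_pivot M j.1 j.2
  set s : Finset {j : Fin m // Mᵀ j ≠ 0} := Finset.univ.filter fun j => g j ≠ 0
  have hsne : s.Nonempty := by
    obtain ⟨j, hj⟩ := hc
    exact ⟨j, by simp [s, hj]⟩
  obtain ⟨j0, hj0s, hj0max⟩ := s.exists_max_image p hsne
  have hgj0 : g j0 ≠ 0 := by simpa [s] using hj0s
  have hzero := congrFun hg (p j0)
  have heval : (∑ j, g j • Mᵀ j.1) (p j0) = ∑ j, g j * M (p j0) j.1 := by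
    simp [transpose_apply]
  rw [heval] at hzero
  have hsum : ∑ j, g j * M (p j0) j.1 = g j0 * M (p j0) j0.1 := by
    rw [Finset.sum_eq_single j0]
    · intro j _ hjne
      by_cases hgj : g j = 0
      · simp [hgj]
      · have hjs : j ∈ s := by simp [s, hgj]
        have hle : p j ≤ p j0 := hj0max j hjs
        have hne : p j ≠ p j0 := by
          intro he
          exact hjne (Subtype.ext (hred (p j0) j.1 j0.1 (he ▸ hp j) (hp j0)))
        have : M (p j0) j.1 = 0 := (hp j).2 _ (lt_of_le_of_ne hle hne)
        simp [this]
    · intro h; exact absurd (Finset.mem_univ j0) h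
  rw [hsum] at hzero
  rcases mul_eq_zero.mp hzero with h | h
  · exact hgj0 h
  · exact (hp j0).1 h

theorem kernel_basis_from_reduction {m : ℕ}
    (D V : Matrix (Fin m) (Fin m) (ZMod 2))
    (hVu : IsUnit V) (hVt : V.BlockTriangular id)
    (hred : Reduced (D * V)) :
    (∀ j : Fin m, (D * V)ᵀ j = 0 → Vᵀ j ∈ LinearMap.ker D.mulVecLin) ∧
    LinearIndependent (ZMod 2)
      (fun j : {j : Fin m // (D * V)ᵀ j = 0} => Vᵀ j.1) ∧
    Submodule.span (ZMod 2)
      (Set.range (fun j : {j : Fin m // (D * V)ᵀ j = 0} => Vᵀ j.1)) =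
      LinearMap.ker D.mulVecLin := by
  classical
  set R := D * V with hR
  -- part 1
  have part1 : ∀ j : Fin m, Rᵀ j = 0 → Vᵀ j ∈ LinearMap.ker D.mulVecLin := by
    intro j hj
    rw [LinearMap.mem_ker]
    funext i
    have := congrFun hj i
    simpa [mulVecLin_apply, mulVec, dotProduct, transpose_apply, mul_apply, R] using this
  -- part 2
  have hVcols : LinearIndependent (ZMod 2) (fun j : Fin m => Vᵀ j) :=
    Matrix.linearIndependent_cols_iff_isUnit.mpr hVu
  have part2 : LinearIndependent (ZMod 2)
      (fun j : {j : Fin m // Rᵀ j = 0} => Vᵀ j.1) :=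
    hVcols.comp Subtype.val Subtype.val_injective
  refine ⟨part1, part2, ?_⟩
  -- dimension counting
  have hle : Submodule.span (ZMod 2)
      (Set.range (fun j : {j : Fin m // Rᵀ j = 0} => Vᵀ j.1)) ≤
      LinearMap.ker D.mulVecLin := by
    rw [Submodule.span_le]
    rintro _ ⟨j, rfl⟩
    exact part1 j.1 j.2
  -- rank R = card of nonzero columns
  have hindepR := reduced_linearIndependent R hred
  have hspanR : Submodule.span (ZMod 2)
      (Set.range (fun j : {j : Fin m // Rᵀ j ≠ 0} => Rᵀ j.1)) =
      Submodule.span (ZMod 2) (Set.range Rᵀ) := by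
    apply le_antisymm
    · apply Submodule.span_mono
      rintro _ ⟨j, rfl⟩
      exact ⟨j.1, rfl⟩
    · rw [Submodule.span_le]
      rintro _ ⟨j, rfl⟩
      by_cases hj : Rᵀ j = 0
      · rw [hj]; exact Submodule.zero_mem _
      · exact Submodule.subset_span ⟨⟨j, hj⟩, rfl⟩
  have hrankR : R.rank = Fintype.card {j : Fin m // Rᵀ j ≠ 0} := by
    rw [Matrix.rank, Matrix.range_mulVecLin]
    change Module.finrank (ZMod 2) (Submodule.span (ZMod 2) (Set.range Rᵀ)) = _
    rw [← hspanR]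
    exact finrank_span_eq_card hindepR
  have hrankD : D.rank = R.rank := by
    rw [hR, Matrix.rank_mul_eq_left_of_isUnit_det V D (hVu.map (Matrix.detMonoidHom))]
  -- dim ker D = card zero columns
  have hcard : Fintype.card {j : Fin m // Rᵀ j = 0} +
      Fintype.card {j : Fin m // Rᵀ j ≠ 0} = m := by
    have h1 := Fintype.card_subtype_compl (fun j : Fin m => Rᵀ j = 0)
    have h2 : Fintype.card {j : Fin m // Rᵀ j = 0} ≤ Fintype.card (Fin m) :=
      Fintype.card_subtype_le _
    simp only [ne_eq, Fintype.card_fin] at h1 h2 ⊢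
    omega
  have hrn := LinearMap.finrank_range_add_finrank_ker D.mulVecLin
  have hdom : Module.finrank (ZMod 2) (Fin m → ZMod 2) = m := by
    simp [Module.finrank_fintype_fun_eq_card]
  have hker : Module.finrank (ZMod 2) (LinearMap.ker D.mulVecLin) =
      Fintype.card {j : Fin m // Rᵀ j = 0} := by
    have hrangeD : Module.finrank (ZMod 2)
        (LinearMap.range D.mulVecLin) = D.rank := rfl
    rw [hdom] at hrn
    rw [hrangeD, hrankD, hrankR] at hrn
    have hrn' : Fintype.card {j : Fin m // Rᵀ j ≠ 0} +
        Module.finrank (ZMod 2) (LinearMap.ker D.mulVecLin) = m := hrn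
    have hcard' : Fintype.card {j : Fin m // Rᵀ j = 0} +
        Fintype.card {j : Fin m // Rᵀ j ≠ 0} = m := hcard
    omega
  have hspan : Module.finrank (ZMod 2)
      (Submodule.span (ZMod 2)
        (Set.range (fun j : {j : Fin m // Rᵀ j = 0} => Vᵀ j.1))) =
      Fintype.card {j : Fin m // Rᵀ j = 0} := finrank_span_eq_card part2
  exact Submodule.eq_of_le_of_finrank_le hle (by rw [hker, hspan])
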